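/- Let (X,T) be a transitive topological dynamical system which is disjoint from every minimal topological dynamical system. Then every transitive point of (X,T) is F_s-product recurrent (i.e. weakly product recurrent); moreover, if X has more than one point, then every transitive point of (X,T) is non-minimal. -/

import Mathlib

open Set Filter Topology Function

namespace PaperFormal

/-- The return-time set `N(x,U) = {n ∈ ℤ₊ : Tⁿ x ∈ U}`. -/
def retTimes {X : Type} (T : X → X) (x : X) (U : Set X) : Set ℕ :=
  {n : ℕ | T^[n] x ∈ U}

/-- A point is recurrent if `N(x,U)` is infinite for every neighborhood `U` of `x`. -/
def RecurrentPt {X : Type} [TopologicalSpace X] (T : X → X) (x : X) : Prop :=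
  ∀ U ∈ nhds x, (retTimes T x U).Infinite

/-- The (forward) orbit closure of a point. -/
def orbitClosure {X : Type} [TopologicalSpace X] (T : X → X) (x : X) : Set X :=
  closure (Set.range fun n : ℕ => T^[n] x)

/-- A pair `(x,y)` is proximal if `lim T^{nᵢ} x = lim T^{nᵢ} y` along some sequence `nᵢ`. -/
def ProximalPair {X : Type} [TopologicalSpace X] (T : X → X) (x y : X) : Prop :=
  ∃ (u : ℕ → ℕ) (z : X),
    Tendsto (fun i => T^[u i] x) atTop (nhds z) ∧
    Tendsto (fun i => T^[u i] y) atTop (nhds z)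

/-- A point `x` is distal if every `y` in its orbit closure proximal to `x` equals `x`. -/
def DistalPt {X : Type} [TopologicalSpace X] (T : X → X) (x : X) : Prop :=
  ∀ y ∈ orbitClosure T x, ProximalPair T x y → y = x

/-- `A` is a minimal set: nonempty, closed, invariant, with no proper such subset. -/
def IsMinimalSet {X : Type} [TopologicalSpace X] (T : X → X) (A : Set X) : Prop :=
  A.Nonempty ∧ IsClosed A ∧ Set.MapsTo T A A ∧
    ∀ B ⊆ A, B.Nonempty → IsClosed B → Set.MapsTo T B B → B = A

/-- A point is minimal (almost periodic) if its orbit closure is a minimal set. -/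
def IsMinimalPt {X : Type} [TopologicalSpace X] (T : X → X) (x : X) : Prop :=
  IsMinimalSet T (orbitClosure T x)

/-- A minimal system: no proper nonempty closed invariant subset. -/
def MinimalSys {X : Type} [TopologicalSpace X] (T : X → X) : Prop :=
  ∀ B : Set X, B.Nonempty → IsClosed B → Set.MapsTo T B B → B = Set.univ

/-- A transitive system: `N(U,V)` is infinite for all opene `U`, `V`. -/
def TransitiveSys {X : Type} [TopologicalSpace X] (T : X → X) : Prop :=
  ∀ U V : Set X, IsOpen U → IsOpen V → U.Nonempty → V.Nonempty →
    {n : ℕ | (U ∩ T^[n] ⁻¹' V).Nonempty}.Infinite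

/-- Transitivity of the subsystem on an invariant subset `A` (relative open sets). -/
def TransitiveOn {X : Type} [TopologicalSpace X] (T : X → X) (A : Set X) : Prop :=
  ∀ U V : Set X, IsOpen U → IsOpen V → (U ∩ A).Nonempty → (V ∩ A).Nonempty →
    {n : ℕ | (U ∩ A ∩ T^[n] ⁻¹' V).Nonempty}.Infinite

/-- A transitive point: a point with dense forward orbit. -/
def TransPt {X : Type} [TopologicalSpace X] (T : X → X) (x : X) : Prop :=
  Dense (Set.range fun n : ℕ => T^[n] x)

/-- Finite sums of the sequence `p` over nonempty finite index sets contained in `[n,∞)`. -/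
def FSfrom (p : ℕ → ℕ) (n : ℕ) : Set ℕ :=
  {m | ∃ α : Finset ℕ, α.Nonempty ∧ (∀ i ∈ α, n ≤ i) ∧ m = ∑ i ∈ α, p i}

/-- Finite sums of the sequence `p` over nonempty finite index sets. -/
def FS (p : ℕ → ℕ) : Set ℕ := FSfrom p 0

/-- An IP set: a set containing all finite sums of some sequence of natural numbers. -/
def IPSet (A : Set ℕ) : Prop :=
  ∃ p : ℕ → ℕ, (∀ i, 0 < p i) ∧ FS p ⊆ A

/-- An IP* set: a set meeting every IP set. -/
def IPStar (A : Set ℕ) : Prop :=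
  ∀ B : Set ℕ, IPSet B → (A ∩ B).Nonempty

/-- A syndetic set: a set with bounded gaps. -/
def Syndetic (S : Set ℕ) : Prop :=
  ∃ N : ℕ, ∀ m : ℕ, ∃ k ∈ S, m ≤ k ∧ k ≤ m + N

/-- A thick set: a set containing arbitrarily long runs of consecutive integers. -/
def Thick (S : Set ℕ) : Prop :=
  ∀ n : ℕ, ∃ m : ℕ, ∀ i ≤ n, m + i ∈ S

/-- A piecewise syndetic set: an intersection of a syndetic set with a thick set. -/
def PiecewiseSyndetic (A : Set ℕ) : Prop :=
  ∃ S₁ S₂ : Set ℕ, Syndetic S₁ ∧ Thick S₂ ∧ A = S₁ ∩ S₂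

/-- A thickly syndetic set: a set meeting every piecewise syndetic set. -/
def ThicklySyndetic (A : Set ℕ) : Prop :=
  ∀ B : Set ℕ, PiecewiseSyndetic B → (A ∩ B).Nonempty

/-- `x` is `F`-recurrent for the family `F` if `N(x,U) ∈ F` for every neighborhood `U`. -/
def FRecurrentPt {X : Type} [TopologicalSpace X] (F : Set (Set ℕ)) (T : X → X) (x : X) :
    Prop :=
  ∀ U ∈ nhds x, retTimes T x U ∈ F

/-- `x` is `F`-product recurrent: `(x,y)` is recurrent for every `F`-recurrent point `y`
in any topological dynamical system `(Y,S)`. -/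
def FProductRecurrent {X : Type} [TopologicalSpace X] (F : Set (Set ℕ)) (T : X → X)
    (x : X) : Prop :=
  ∀ (Y : Type) [MetricSpace Y] [CompactSpace Y] (S : Y → Y),
    Continuous S → Function.Surjective S →
      ∀ y : Y, FRecurrentPt F S y → RecurrentPt (Prod.map T S) (x, y)

/-- A joining of `(X,T)` and `(Y,S)`: a nonempty closed invariant subset of `X × Y`
projecting onto both coordinates. -/
def Joining {X Y : Type} [TopologicalSpace X] [TopologicalSpace Y]
    (T : X → X) (S : Y → Y) (J : Set (X × Y)) : Prop :=
  J.Nonempty ∧ IsClosed J ∧ Set.MapsTo (Prod.map T S) J J ∧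
    Prod.fst '' J = Set.univ ∧ Prod.snd '' J = Set.univ

/-- Two systems are disjoint if their only joining is the full product. -/
def DisjointSys {X Y : Type} [TopologicalSpace X] [TopologicalSpace Y]
    (T : X → X) (S : Y → Y) : Prop :=
  ∀ J : Set (X × Y), Joining T S J → J = Set.univ

/-- Property (★) of a point: for each neighborhood `V` of `x` there is `n` such that for
every finite set `S` whose distinct elements are at distance `≥ n`, some common shift `ℓ`
puts all of `T^{s+ℓ} x`, `s ∈ S`, inside `V`. -/
def StarProp {X : Type} [TopologicalSpace X] (T : X → X) (x : X) : Prop :=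
  ∀ V ∈ nhds x, ∃ n : ℕ, ∀ S : Finset ℕ,
    (∀ s ∈ S, ∀ t ∈ S, s < t → n ≤ t - s) →
      ∃ ℓ : ℕ, ∀ s ∈ S, T^[s + ℓ] x ∈ V

/-- `F` is an independence set for the pair `(U₀, U₁)`. -/
def IndepSet {X : Type} (T : X → X) (U₀ U₁ : Set X) (F : Set ℕ) : Prop :=
  ∀ J : Finset ℕ, ↑J ⊆ F → J.Nonempty → ∀ s : ℕ → Bool,
    (⋂ j ∈ J, T^[j] ⁻¹' (if s j then U₁ else U₀)).Nonempty


section Aux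

lemma mem_orbitClosure_self {X : Type} [TopologicalSpace X] (T : X → X) (x : X) :
    x ∈ orbitClosure T x :=
  subset_closure ⟨0, rfl⟩

lemma mapsTo_orbitClosure {X : Type} [TopologicalSpace X] {T : X → X} (hT : Continuous T)
    (x : X) : MapsTo T (orbitClosure T x) (orbitClosure T x) := by
  intro z hz
  have h1 : T '' orbitClosure T x ⊆ closure (T '' Set.range fun n : ℕ => T^[n] x) :=
    image_closure_subset_closure_image hT
  have h2 : (T '' Set.range fun n : ℕ => T^[n] x) ⊆ Set.range fun n : ℕ => T^[n] x := by
    rintro _ ⟨_, ⟨n, rfl⟩, rfl⟩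
    exact ⟨n + 1, by simp [Function.iterate_succ_apply']⟩
  exact closure_mono h2 (h1 ⟨z, hz, rfl⟩)

lemma orbitClosure_subset {X : Type} [TopologicalSpace X] {T : X → X} {x : X} {A : Set X}
    (hxA : x ∈ A) (hA : IsClosed A) (hinv : MapsTo T A A) : orbitClosure T x ⊆ A := by
  apply closure_minimal _ hA
  rintro _ ⟨n, rfl⟩
  exact hinv.iterate n hxA

/-- orbit of any iterate is dense if orbit dense and map surjective -/
lemma dense_orbit_iterate {X : Type} [TopologicalSpace X] {T : X → X} (hc : Continuous T)
    (hs : Surjective T) {x : X} (hx : Dense (Set.range fun n : ℕ => T^[n] x)) (j : ℕ) :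
    Dense (Set.range fun n : ℕ => T^[n] (T^[j] x)) := by
  rw [dense_iff_closure_eq] at hx ⊢
  apply eq_univ_of_univ_subset
  have h1 : T^[j] '' (Set.univ : Set X) = Set.univ :=
    Set.image_univ_of_surjective (hs.iterate j)
  calc (Set.univ : Set X) = T^[j] '' Set.univ := h1.symm
    _ = T^[j] '' closure (Set.range fun n : ℕ => T^[n] x) := by rw [hx]
    _ ⊆ closure (T^[j] '' Set.range fun n : ℕ => T^[n] x) :=
        image_closure_subset_closure_image (hc.iterate j)
    _ ⊆ closure (Set.range fun n : ℕ => T^[n] (T^[j] x)) := by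
        apply closure_mono
        rintro _ ⟨_, ⟨n, rfl⟩, rfl⟩
        exact ⟨n, by simp only [← Function.iterate_add_apply, Nat.add_comm]⟩

lemma recurrent_of_dense_orbit {X : Type} [TopologicalSpace X] {T : X → X} (hc : Continuous T)
    (hs : Surjective T) {x : X} (hx : Dense (Set.range fun n : ℕ => T^[n] x)) :
    RecurrentPt T x := by
  intro U hU
  intro hfin
  obtain ⟨N, hN⟩ := hfin.bddAbove
  obtain ⟨V, hVU, hVopen, hxV⟩ := mem_nhds_iff.mp hU
  have hd := dense_orbit_iterate hc hs hx (N + 1)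
  obtain ⟨_, ⟨k, rfl⟩, hk⟩ := hd.exists_mem_open hVopen ⟨x, hxV⟩
  have hmem : (N + 1 + k) ∈ retTimes T x U := by
    show T^[N+1+k] x ∈ U
    rw [Nat.add_comm (N+1) k, Function.iterate_add_apply]
    exact hVU hk
  have := hN hmem
  omega

/-- Syndetic return times ⇒ every nonempty closed invariant subset of the orbit closure
is the whole orbit closure. -/
lemma minimal_orbitClosure_of_syndetic {Y : Type} [MetricSpace Y] [CompactSpace Y]
    {S : Y → Y} (hc : Continuous S) {y : Y}
    (hy : ∀ U ∈ nhds y, Syndetic (retTimes S y U))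
    {A : Set Y} (hAsub : A ⊆ orbitClosure S y) (hAne : A.Nonempty) (hAcl : IsClosed A)
    (hAinv : MapsTo S A A) : A = orbitClosure S y := by
  by_cases hyA : y ∈ A
  · exact le_antisymm hAsub (orbitClosure_subset hyA hAcl hAinv)
  exfalso
  have hpos : 0 < Metric.infDist y A := (hAcl.notMem_iff_infDist_pos hAne).mp hyA
  set ε := Metric.infDist y A / 2 with hε
  have hεpos : 0 < ε := by positivity
  obtain ⟨N, hNsyn⟩ := hy (Metric.ball y ε) (Metric.ball_mem_nhds y hεpos)
  obtain ⟨a, ha⟩ := hAne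
  have hVopen : IsOpen (⋂ i ∈ Finset.range (N + 1), S^[i] ⁻¹' Metric.ball (S^[i] a) ε) := by
    apply isOpen_biInter_finset
    intro i _
    exact (Metric.isOpen_ball).preimage (hc.iterate i)
  have haV : a ∈ ⋂ i ∈ Finset.range (N + 1), S^[i] ⁻¹' Metric.ball (S^[i] a) ε := by
    simp only [Set.mem_iInter, Set.mem_preimage]
    intro i _
    exact Metric.mem_ball_self hεpos
  have haZ : a ∈ closure (Set.range fun n : ℕ => S^[n] y) := hAsub ha
  obtain ⟨z, hz1, m, hz2⟩ := mem_closure_iff_nhds.mp haZ _ (hVopen.mem_nhds haV)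
  subst hz2
  simp only [Set.mem_iInter, Set.mem_preimage, Finset.mem_range, Metric.mem_ball] at hz1
  obtain ⟨k, hkmem, hk1, hk2⟩ := hNsyn m
  have hkball : dist (S^[k] y) y < ε := hkmem
  set i := k - m with hi
  have hiN : i < N + 1 := by omega
  have h1 : dist (S^[i] (S^[m] y)) (S^[i] a) < ε := hz1 i hiN
  have h2 : S^[i] (S^[m] y) = S^[k] y := by
    rw [← Function.iterate_add_apply]
    congr 1
    omega
  have h3 : S^[i] a ∈ A := hAinv.iterate i ha
  have h4 : 2 * ε ≤ dist y (S^[i] a) := by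
    have := Metric.infDist_le_dist_of_mem h3 (x := y)
    rw [hε] at *
    linarith
  rw [h2] at h1
  have := dist_triangle y (S^[k] y) (S^[i] a)
  rw [dist_comm y (S^[k] y)] at this
  linarith

lemma coe_restrict_iterate {Y : Type} (S : Y → Y) (Z : Set Y) (h : MapsTo S Z Z)
    (y' : ↥Z) (n : ℕ) :
    ((fun z : ↥Z => (⟨S z.1, h z.2⟩ : ↥Z))^[n] y' : Y) = S^[n] (y' : Y) := by
  induction n with
  | zero => rfl
  | succ n ih =>
    rw [Function.iterate_succ_apply', Function.iterate_succ_apply']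
    exact congrArg S ih

end Aux

/-- if a transitive system is disjoint from every minimal system, then every
transitive point is `F_s`-product recurrent; moreover if `X` has more than one point then
every transitive point is non-minimal. -/

theorem statement_7 {X : Type} [MetricSpace X] [CompactSpace X] (T : X → X)
    (hTc : Continuous T) (hTs : Function.Surjective T) (htr : TransitiveSys T)
    (hdisj : ∀ (Y : Type) [MetricSpace Y] [CompactSpace Y] (S : Y → Y),
      Continuous S → Function.Surjective S → MinimalSys S → DisjointSys T S)
    (x : X) (hx : TransPt T x) :
    FProductRecurrent {A : Set ℕ | Syndetic A} T x ∧
      ((∃ a b : X, a ≠ b) → ¬ IsMinimalPt T x) := by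
  constructor
  · -- F_s-product recurrence
    intro Y _ _ S hSc hSs y hyF
    have hyS : ∀ U ∈ nhds y, Syndetic (retTimes S y U) := fun U hU => hyF U hU
    set Z : Set Y := orbitClosure S y with hZdef
    have hZcl : IsClosed Z := isClosed_closure
    have hZinv : MapsTo S Z Z := mapsTo_orbitClosure hSc y
    have hyZ : y ∈ Z := mem_orbitClosure_self S y
    have hZcompact : IsCompact Z := hZcl.isCompact
    have : CompactSpace ↥Z := isCompact_iff_compactSpace.mp hZcompact
    -- the restricted system
    set S' : ↥Z → ↥Z := fun z => (⟨S z.1, hZinv z.2⟩ : ↥Z) with hS'def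
    have hS'c : Continuous S' := (hSc.comp continuous_subtype_val).subtype_mk _
    have hcoe : ∀ (y' : ↥Z) (n : ℕ), (S'^[n] y' : Y) = S^[n] (y' : Y) :=
      coe_restrict_iterate S Z hZinv
    -- minimality of Z
    have hmin : ∀ A : Set Y, A ⊆ Z → A.Nonempty → IsClosed A → MapsTo S A A → A = Z :=
      fun A h1 h2 h3 h4 => minimal_orbitClosure_of_syndetic hSc hyS h1 h2 h3 h4
    -- surjectivity of S'
    have hSZ : S '' Z = Z := by
      apply hmin
      · exact Set.image_subset_iff.mpr (fun a ha => hZinv ha)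
      · exact ⟨S y, y, hyZ, rfl⟩
      · exact (hZcompact.image hSc).isClosed
      · rintro _ ⟨a, ha, rfl⟩
        exact ⟨S a, hZinv ha, rfl⟩
    have hS's : Surjective S' := by
      rintro ⟨z, hz⟩
      rw [← hSZ] at hz
      obtain ⟨a, haZ, haz⟩ := hz
      exact ⟨⟨a, haZ⟩, Subtype.ext haz⟩
    -- S' is a minimal system
    have hS'min : MinimalSys S' := by
      intro B hBne hBcl hBinv
      have hA : (Subtype.val '' B : Set Y) = Z := by
        apply hmin
        · rintro _ ⟨b, _, rfl⟩; exact b.2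
        · obtain ⟨b, hb⟩ := hBne; exact ⟨b, b, hb, rfl⟩
        · exact ((hBcl.isCompact).image continuous_subtype_val).isClosed
        · rintro _ ⟨b, hb, rfl⟩
          exact ⟨S' b, hBinv hb, rfl⟩
      ext b
      simp only [Set.mem_univ, iff_true]
      have hbB : (b : Y) ∈ Subtype.val '' B := by
        have hb2 := b.2
        rw [hA]
        exact hb2
      obtain ⟨b', hb', hbb⟩ := hbB
      have hbb' : b' = b := Subtype.ext hbb
      rwa [← hbb']
    have hdZ : DisjointSys T S' := hdisj ↥Z S' hS'c hS's hS'min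
    -- the joining given by the orbit closure of (x, y')
    set y' : ↥Z := ⟨y, hyZ⟩ with hy'def
    set R : X × ↥Z → X × ↥Z := Prod.map T S' with hRdef
    have hRc : Continuous R := hTc.prodMap hS'c
    have hRs : Surjective R := hTs.prodMap hS's
    set J : Set (X × ↥Z) := orbitClosure R (x, y') with hJdef
    have hRiter : ∀ n : ℕ, R^[n] (x, y') = (T^[n] x, S'^[n] y') := by
      intro n
      rw [hRdef, Prod.map_iterate]
      rfl
    have hJcl : IsClosed J := isClosed_closure
    have hJcompact : IsCompact J := hJcl.isCompact
    have hJuniv : J = Set.univ := by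
      apply hdZ
      refine ⟨⟨(x, y'), mem_orbitClosure_self R (x, y')⟩, hJcl, mapsTo_orbitClosure hRc _,
        ?_, ?_⟩
      · -- first projection
        have hsub : (Set.range fun n : ℕ => T^[n] x) ⊆ Prod.fst '' J := by
          rintro _ ⟨n, rfl⟩
          exact ⟨R^[n] (x, y'), subset_closure ⟨n, rfl⟩, by rw [hRiter]⟩
        have hclosed : IsClosed (Prod.fst '' J) := (hJcompact.image continuous_fst).isClosed
        apply eq_univ_of_univ_subset
        calc (Set.univ : Set X) = closure (Set.range fun n : ℕ => T^[n] x) := hx.closure_eq.symm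
          _ ⊆ closure (Prod.fst '' J) := closure_mono hsub
          _ = Prod.fst '' J := hclosed.closure_eq
      · -- second projection
        have hdense : Dense (Set.range fun n : ℕ => S'^[n] y') := by
          intro z
          rw [closure_subtype]
          have : (Subtype.val '' Set.range fun n : ℕ => S'^[n] y')
              = (Set.range fun n : ℕ => S^[n] y) := by
            ext w
            constructor
            · rintro ⟨_, ⟨n, rfl⟩, rfl⟩; exact ⟨n, (hcoe y' n).symm⟩
            · rintro ⟨n, rfl⟩; exact ⟨S'^[n] y', ⟨n, rfl⟩, hcoe y' n⟩
          rw [this]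
          exact z.2
        have hsub : (Set.range fun n : ℕ => S'^[n] y') ⊆ Prod.snd '' J := by
          rintro _ ⟨n, rfl⟩
          exact ⟨R^[n] (x, y'), subset_closure ⟨n, rfl⟩, by rw [hRiter]⟩
        have hclosed : IsClosed (Prod.snd '' J) := (hJcompact.image continuous_snd).isClosed
        apply eq_univ_of_univ_subset
        calc (Set.univ : Set ↥Z) = closure (Set.range fun n : ℕ => S'^[n] y') :=
              hdense.closure_eq.symm
          _ ⊆ closure (Prod.snd '' J) := closure_mono hsub
          _ = Prod.snd '' J := hclosed.closure_eq
    have hdenseJ : Dense (Set.range fun n : ℕ => R^[n] (x, y')) := by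
      rw [dense_iff_closure_eq]
      exact hJuniv
    have hrec : RecurrentPt R (x, y') := recurrent_of_dense_orbit hRc hRs hdenseJ
    -- transfer back to X × Y
    intro U hU
    set ι : X × ↥Z → X × Y := Prod.map id Subtype.val with hιdef
    have hιc : Continuous ι := continuous_id.prodMap continuous_subtype_val
    have hιxy : ι (x, y') = (x, y) := rfl
    have hU' : ι ⁻¹' U ∈ nhds (x, y') := hιc.continuousAt.preimage_mem_nhds (hιxy ▸ hU)
    apply Set.Infinite.mono _ (hrec _ hU')
    intro n hn
    have hn' : R^[n] (x, y') ∈ ι ⁻¹' U := hn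
    have : ι (R^[n] (x, y')) = (Prod.map T S)^[n] (x, y) := by
      rw [hRiter n, Prod.map_iterate]
      exact Prod.ext rfl (hcoe y' n)
    show (Prod.map T S)^[n] (x, y) ∈ U
    rw [← this]
    exact hn'
  · -- non-minimality
    rintro ⟨a, b, hab⟩ hmin
    have horb : orbitClosure T x = Set.univ := hx.closure_eq
    have hms : IsMinimalSet T Set.univ := by
      rw [← horb]
      exact hmin
    have hTmin : MinimalSys T := by
      intro B hBne hBcl hBinv
      exact hms.2.2.2 B (Set.subset_univ B) hBne hBcl hBinv
    have hdT : DisjointSys T T := hdisj X T hTc hTs hTmin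
    have hdiag : Set.diagonal X = Set.univ := by
      apply hdT
      refine ⟨⟨(a, a), rfl⟩, isClosed_diagonal, ?_, ?_, ?_⟩
      · rintro ⟨p, q⟩ hpq
        simp only [Set.mem_diagonal_iff] at hpq ⊢
        rw [hpq]
        rfl
      · apply eq_univ_of_forall
        intro z
        exact ⟨(z, z), rfl, rfl⟩
      · apply eq_univ_of_forall
        intro z
        exact ⟨(z, z), rfl, rfl⟩
    have : (a, b) ∈ Set.diagonal X := hdiag ▸ Set.mem_univ (a, b)
    exact hab this


end PaperFormal
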